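/- Let φ ∈ ℳ and let l ≥ 0 be an integer with n ≥ 1. If ∫₁^∞ dt/(t φ(t)²) < ∞, then every w ∈ H^{l+n/2, φ}(ℝⁿ) (after modification on a null set) belongs to C^l(ℝⁿ) with bounded derivatives up to order l, and there is a constant c > 0 independent of w such that sup_{|α| ≤ l} ‖∂^α w‖_∞ ≤ c ‖w‖_{l+n/2, φ}. -/

import Mathlib

open Filter MeasureTheory ENNReal

noncomputable section

/-- Slowly varying at infinity in the sense of Karamata. -/
def IsSlowlyVarying (φ : ℝ → ℝ) : Prop :=
  ∀ l : ℝ, 0 < l → Tendsto (fun t => φ (l * t) / φ t) atTop (nhds 1)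

/-- The class `ℳ` of regularity parameters. -/
def MemM (φ : ℝ → ℝ) : Prop :=
  Measurable φ ∧ (∀ t, 1 ≤ t → 0 < φ t) ∧
  (∀ K : Set ℝ, IsCompact K → K ⊆ Set.Ici 1 →
    ∃ a b : ℝ, 0 < a ∧ ∀ t ∈ K, a ≤ φ t ∧ φ t ≤ b) ∧
  IsSlowlyVarying φ

/-- The smoothed absolute value `⟨ξ⟩ = (1 + |ξ|²)^{1/2}`. -/
def jap {n : ℕ} (ξ : EuclideanSpace ℝ (Fin n)) : ℝ := Real.sqrt (1 + ‖ξ‖ ^ 2)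

/-- The weight `⟨ξ⟩^s φ(⟨ξ⟩)` defining the Hörmander space `H^{s,φ}`. -/
def hWeight (s : ℝ) (φ : ℝ → ℝ) {n : ℕ} (ξ : EuclideanSpace ℝ (Fin n)) : ℝ :=
  jap ξ ^ s * φ (jap ξ)

/-- The square of the Hörmander norm `‖·‖_{s,φ}`, applied to the Fourier transform `ŵ`
of a tempered distribution `w`:  `∫ ⟨ξ⟩^{2s} φ(⟨ξ⟩)² |ŵ(ξ)|² dξ`. -/
def hNormSq (n : ℕ) (s : ℝ) (φ : ℝ → ℝ) (w : EuclideanSpace ℝ (Fin n) → ℂ) : ℝ≥0∞ :=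
  ∫⁻ ξ, ENNReal.ofReal (hWeight s φ ξ ^ 2) * (‖w ξ‖₊ : ℝ≥0∞) ^ 2


section Aux

open Set Metric

lemma lintegral_norm_polar {E : Type*} [NormedAddCommGroup E] [NormedSpace ℝ E]
    [MeasurableSpace E] [BorelSpace E] [FiniteDimensional ℝ E] [Nontrivial E]
    (μ : Measure E) [μ.IsAddHaarMeasure] (g : ℝ → ℝ≥0∞) (hg : Measurable g) :
    ∫⁻ x, g ‖x‖ ∂μ = μ.toSphere univ *
      ∫⁻ y in Ioi (0:ℝ), ENNReal.ofReal (y ^ (Module.finrank ℝ E - 1)) * g y := by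
  calc ∫⁻ x, g ‖x‖ ∂μ
      = ∫⁻ x in ({(0:E)}ᶜ), g ‖x‖ ∂μ := by
        rw [MeasureTheory.restrict_compl_singleton]
    _ = ∫⁻ x : ({(0:E)}ᶜ : Set E), g ‖(x:E)‖ ∂(μ.comap (↑)) :=
        (lintegral_subtype_comap (measurableSet_singleton _).compl _).symm
    _ = ∫⁻ p : sphere (0:E) 1 × Ioi (0:ℝ), g p.2
          ∂(μ.toSphere.prod (.volumeIoiPow (Module.finrank ℝ E - 1))) := by
        rw [← μ.measurePreserving_homeomorphUnitSphereProd.lintegral_comp_emb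
          (Homeomorph.measurableEmbedding _) (fun p => g p.2)]
        simp [homeomorphUnitSphereProd]
    _ = μ.toSphere univ * ∫⁻ y : Ioi (0:ℝ), g y ∂(Measure.volumeIoiPow (Module.finrank ℝ E - 1)) := by
        rw [lintegral_prod (fun p : ↑(sphere (0:E) 1) × ↑(Ioi (0:ℝ)) => g ↑p.2)
          (by fun_prop)]
        simp [lintegral_const, mul_comm]
    _ = _ := by
        rw [Measure.volumeIoiPow, lintegral_withDensity_eq_lintegral_mul _
          (by fun_prop) (g := fun y : ↑(Ioi (0:ℝ)) => g ↑y) (by fun_prop)]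
        congr 1
        exact lintegral_subtype_comap measurableSet_Ioi
          (fun r => ENNReal.ofReal (r ^ (Module.finrank ℝ E - 1)) * g r)

lemma sqrt_one_add_sq_deriv (y : ℝ) :
    HasDerivAt (fun z : ℝ => Real.sqrt (1 + z ^ 2)) (y / Real.sqrt (1 + y ^ 2)) y := by
  have h0 : (0:ℝ) < 1 + y ^ 2 := by positivity
  have h1 : HasDerivAt (fun z : ℝ => 1 + z ^ 2) (2 * y) y := by
    simpa using ((hasDerivAt_pow 2 y).const_add 1)
  have h2 := (Real.hasDerivAt_sqrt h0.ne').comp y h1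
  have : Real.sqrt (1 + y ^ 2) ≠ 0 := by positivity
  rw [← show 1 / (2 * Real.sqrt (1 + y ^ 2)) * (2 * y) = y / Real.sqrt (1 + y ^ 2) by
    rw [div_mul_eq_mul_div, one_mul, mul_div_mul_left _ _ two_ne_zero]]
  exact h2

lemma tail_lt_top (n : ℕ) (hn : 0 < n) (φ : ℝ → ℝ)
    (hpos : ∀ t, 1 ≤ t → 0 < φ t)
    (hcomp : ∀ K : Set ℝ, IsCompact K → K ⊆ Set.Ici 1 →
      ∃ a b : ℝ, 0 < a ∧ ∀ t ∈ K, a ≤ φ t ∧ φ t ≤ b)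
    (hint : ∫⁻ t in Set.Ici (1 : ℝ), ENNReal.ofReal (1 / (t * φ t ^ 2)) < ⊤) :
    ∫⁻ y in Ioi (0:ℝ), ENNReal.ofReal (y ^ (n-1)) *
      ENNReal.ofReal ((Real.sqrt (1 + y ^ 2) ^ n)⁻¹ / φ (Real.sqrt (1 + y ^ 2)) ^ 2) < ⊤ := by
  set F : ℝ → ℝ≥0∞ := fun y => ENNReal.ofReal (y ^ (n-1)) *
      ENNReal.ofReal ((Real.sqrt (1 + y ^ 2) ^ n)⁻¹ / φ (Real.sqrt (1 + y ^ 2)) ^ 2) with hF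
  have hsplit : Ioc (0:ℝ) 1 ∪ Ioi (1:ℝ) = Ioi (0:ℝ) := Ioc_union_Ioi_eq_Ioi zero_le_one
  rw [← hsplit, lintegral_union measurableSet_Ioi (Ioc_disjoint_Ioi le_rfl)]
  have part1 : ∫⁻ y in Ioc (0:ℝ) 1, F y < ⊤ := by
    obtain ⟨a, b, ha, hab⟩ := hcomp (Icc 1 2) isCompact_Icc (fun t ht => ht.1)
    have bound : ∀ y ∈ Ioc (0:ℝ) 1, F y ≤ ENNReal.ofReal (1 / a ^ 2) := by
      intro y hy
      have hy0 : 0 < y := hy.1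
      have ht1 : 1 ≤ Real.sqrt (1 + y ^ 2) := by
        rw [Real.one_le_sqrt] <;> nlinarith
      have ht2 : Real.sqrt (1 + y ^ 2) ≤ 2 := by
        have h4 : Real.sqrt (1 + y ^ 2) ≤ Real.sqrt 4 := Real.sqrt_le_sqrt (by nlinarith [hy.2])
        simpa [show (4:ℝ) = 2^2 by norm_num, Real.sqrt_sq (by norm_num : (0:ℝ) ≤ 2)] using h4
      have hφa := (hab _ ⟨ht1, ht2⟩).1
      have key : (Real.sqrt (1 + y ^ 2) ^ n)⁻¹ / φ (Real.sqrt (1 + y ^ 2)) ^ 2 ≤ 1 / a ^ 2 := by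
        have h1 : (Real.sqrt (1 + y ^ 2) ^ n)⁻¹ ≤ 1 := by
          rw [inv_le_one_iff₀]; right; exact one_le_pow₀ ht1
        have h2 : a ^ 2 ≤ φ (Real.sqrt (1 + y ^ 2)) ^ 2 := by nlinarith
        exact div_le_div₀ (by norm_num) h1 (by positivity) h2
      calc F y ≤ ENNReal.ofReal 1 * ENNReal.ofReal (1 / a ^ 2) :=
            mul_le_mul' (ENNReal.ofReal_le_ofReal (by
                calc y ^ (n-1) ≤ 1 ^ (n-1) := pow_le_pow_left₀ hy0.le hy.2 _
                  _ = 1 := one_pow _))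
              (ENNReal.ofReal_le_ofReal key)
        _ = ENNReal.ofReal (1 / a ^ 2) := by simp
    calc ∫⁻ y in Ioc (0:ℝ) 1, F y ≤ ∫⁻ _ in Ioc (0:ℝ) 1, ENNReal.ofReal (1 / a ^ 2) :=
          setLIntegral_mono measurable_const bound
      _ = ENNReal.ofReal (1 / a ^ 2) * volume (Ioc (0:ℝ) 1) := setLIntegral_const _ _
      _ < ⊤ := by
          apply ENNReal.mul_lt_top ENNReal.ofReal_lt_top
          simp [Real.volume_Ioc]
  have part2 : ∫⁻ y in Ioi (1:ℝ), F y < ⊤ := by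
    set h : ℝ → ℝ := fun y => Real.sqrt (1 + y ^ 2) with hh
    set G : ℝ → ℝ≥0∞ := fun t => ENNReal.ofReal (1 / (t * φ t ^ 2)) with hG
    have bound : ∀ y ∈ Ioi (1:ℝ), F y ≤
        ENNReal.ofReal (Real.sqrt 2) * (ENNReal.ofReal |y / h y| * G (h y)) := by
      intro y hy
      have hy1 : (1:ℝ) < y := hy
      have hy0 : (0:ℝ) < y := by linarith
      have ht0 : 0 < h y := Real.sqrt_pos.2 (by positivity)
      have ht1 : 1 ≤ h y := by rw [hh]; rw [Real.one_le_sqrt] <;> nlinarith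
      have hyt : y ≤ h y := by
        rw [hh]
        have := Real.sqrt_le_sqrt (show y ^ 2 ≤ 1 + y ^ 2 by linarith)
        simpa [Real.sqrt_sq hy0.le] using this
      have hts : h y ≤ Real.sqrt 2 * y := by
        rw [hh]
        have h1 : (1:ℝ) + y ^ 2 ≤ 2 * y ^ 2 := by nlinarith
        have := Real.sqrt_le_sqrt h1
        rwa [Real.sqrt_mul (by norm_num) (y^2), Real.sqrt_sq hy0.le] at this
      have hφt : 0 < φ (h y) := hpos _ ht1
      obtain ⟨m, rfl⟩ : ∃ m, n = m + 1 := ⟨n - 1, (Nat.succ_pred_eq_of_pos hn).symm⟩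
      have key : y ^ m * (h y) ^ 2 ≤ Real.sqrt 2 * y * (h y) ^ (m + 1) := by
        have h1 : y ^ m ≤ (h y) ^ m := pow_le_pow_left₀ hy0.le hyt m
        calc y ^ m * (h y) ^ 2 ≤ (h y) ^ m * (h y) ^ 2 :=
              mul_le_mul_of_nonneg_right h1 (by positivity)
          _ = (h y) ^ (m + 1) * (h y) := by ring
          _ ≤ (h y) ^ (m + 1) * (Real.sqrt 2 * y) :=
              mul_le_mul_of_nonneg_left hts (by positivity)
          _ = Real.sqrt 2 * y * (h y) ^ (m + 1) := by ring
      have main : y ^ (m + 1 - 1) * (((h y) ^ (m + 1))⁻¹ / φ (h y) ^ 2) ≤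
          Real.sqrt 2 * (|y / h y| * (1 / (h y * φ (h y) ^ 2))) := by
        rw [abs_of_pos (by positivity), Nat.add_sub_cancel]
        have e1 : y ^ m * (((h y) ^ (m + 1))⁻¹ / φ (h y) ^ 2)
            = y ^ m / ((h y) ^ (m + 1) * φ (h y) ^ 2) := by
          field_simp
        have e2 : Real.sqrt 2 * (y / h y * (1 / (h y * φ (h y) ^ 2)))
            = (Real.sqrt 2 * y) / ((h y) ^ 2 * φ (h y) ^ 2) := by
          field_simp
        rw [e1, e2, div_le_div_iff₀ (by positivity) (by positivity)]
        nlinarith [mul_le_mul_of_nonneg_right key (sq_nonneg (φ (h y)))]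
      calc F y = ENNReal.ofReal (y ^ (m + 1 - 1) * (((h y) ^ (m + 1))⁻¹ / φ (h y) ^ 2)) := by
            simp only [hF, hh]
            rw [← ENNReal.ofReal_mul (by positivity)]
        _ ≤ ENNReal.ofReal (Real.sqrt 2 * (|y / h y| * (1 / (h y * φ (h y) ^ 2)))) :=
            ENNReal.ofReal_le_ofReal main
        _ = ENNReal.ofReal (Real.sqrt 2) * (ENNReal.ofReal |y / h y| * G (h y)) := by
            rw [hG, ENNReal.ofReal_mul (by positivity), ENNReal.ofReal_mul (abs_nonneg _)]
    have hderiv : ∀ y ∈ Ioi (1:ℝ), HasFDerivWithinAt h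
        ((1 : ℝ →L[ℝ] ℝ).smulRight (y / Real.sqrt (1 + y ^ 2))) (Ioi 1) y :=
      fun y _ => ((sqrt_one_add_sq_deriv y).hasFDerivAt).hasFDerivWithinAt
    have hinj : InjOn h (Ioi (1:ℝ)) := by
      intro p hp q hq hpq
      rw [hh] at hpq
      simp only at hpq
      have h1 : (1:ℝ) + p ^ 2 = 1 + q ^ 2 := by
        have e1 := Real.sq_sqrt (show (0:ℝ) ≤ 1 + p ^ 2 by positivity)
        have e2 := Real.sq_sqrt (show (0:ℝ) ≤ 1 + q ^ 2 by positivity)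
        rw [← e1, ← e2, hpq]
      have hp1 : (1:ℝ) < p := hp
      have hq1 : (1:ℝ) < q := hq
      nlinarith
    have himg : h '' Ioi (1:ℝ) ⊆ Ici (1:ℝ) := by
      rintro t ⟨y, hy, rfl⟩
      have hy1 : (1:ℝ) < y := hy
      show (1:ℝ) ≤ Real.sqrt (1 + y ^ 2)
      rw [Real.one_le_sqrt] <;> nlinarith
    have cov : ∫⁻ y in Ioi (1:ℝ), ENNReal.ofReal |y / Real.sqrt (1 + y ^ 2)| * G (h y)
        = ∫⁻ t in h '' Ioi (1:ℝ), G t := by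
      rw [lintegral_image_eq_lintegral_abs_det_fderiv_mul volume measurableSet_Ioi hderiv hinj G]
      congr 1
      ext y
      congr 2
      rw [ContinuousLinearMap.det_smulRight, ContinuousLinearMap.one_apply, one_mul]
    calc ∫⁻ y in Ioi (1:ℝ), F y
        ≤ ∫⁻ y in Ioi (1:ℝ), ENNReal.ofReal (Real.sqrt 2) *
            (ENNReal.ofReal |y / h y| * G (h y)) := setLIntegral_mono' measurableSet_Ioi bound
      _ = ENNReal.ofReal (Real.sqrt 2) *
            ∫⁻ y in Ioi (1:ℝ), ENNReal.ofReal |y / h y| * G (h y) := by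
          rw [lintegral_const_mul']; exact ENNReal.ofReal_ne_top
      _ = ENNReal.ofReal (Real.sqrt 2) * ∫⁻ t in h '' Ioi (1:ℝ), G t := by rw [← cov]
      _ ≤ ENNReal.ofReal (Real.sqrt 2) * ∫⁻ t in Ici (1:ℝ), G t := by
          gcongr
      _ < ⊤ := ENNReal.mul_lt_top ENNReal.ofReal_lt_top hint
  exact ENNReal.add_lt_top.2 ⟨part1, part2⟩

lemma J_lt_top (n : ℕ) (φ : ℝ → ℝ)
    (hmeas : Measurable φ) (hpos : ∀ t, 1 ≤ t → 0 < φ t)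
    (hcomp : ∀ K : Set ℝ, IsCompact K → K ⊆ Set.Ici 1 →
      ∃ a b : ℝ, 0 < a ∧ ∀ t ∈ K, a ≤ φ t ∧ φ t ≤ b)
    (hint : ∫⁻ t in Set.Ici (1 : ℝ), ENNReal.ofReal (1 / (t * φ t ^ 2)) < ⊤) :
    ∫⁻ ξ : EuclideanSpace ℝ (Fin n),
      ENNReal.ofReal ((jap ξ ^ n)⁻¹ / φ (jap ξ) ^ 2) < ⊤ := by
  set g : ℝ → ℝ≥0∞ := fun r =>
    ENNReal.ofReal ((Real.sqrt (1 + r ^ 2) ^ n)⁻¹ / φ (Real.sqrt (1 + r ^ 2)) ^ 2) with hg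
  have hgm : Measurable g := by
    have h1 : Measurable fun r : ℝ => Real.sqrt (1 + r ^ 2) := by fun_prop
    exact ENNReal.measurable_ofReal.comp
      (((h1.pow_const n).inv).div ((hmeas.comp h1).pow_const 2))
  have hrw : (∫⁻ ξ : EuclideanSpace ℝ (Fin n),
      ENNReal.ofReal ((jap ξ ^ n)⁻¹ / φ (jap ξ) ^ 2)) = ∫⁻ ξ : EuclideanSpace ℝ (Fin n), g ‖ξ‖ := by
    simp only [hg, jap]
  rw [hrw]
  rcases Nat.eq_zero_or_pos n with hn | hn
  · subst hn
    haveI : Unique (EuclideanSpace ℝ (Fin 0)) :=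
      ⟨⟨0⟩, fun a => by ext i; exact i.elim0⟩
    calc ∫⁻ ξ : EuclideanSpace ℝ (Fin 0), g ‖ξ‖ = ∫⁻ _ : EuclideanSpace ℝ (Fin 0), g 0 := by
          apply lintegral_congr
          intro ξ
          rw [Subsingleton.elim ξ 0, norm_zero]
      _ = g 0 * volume (Set.univ : Set (EuclideanSpace ℝ (Fin 0))) := lintegral_const _
      _ < ⊤ := by
          apply ENNReal.mul_lt_top ENNReal.ofReal_lt_top
          calc volume (Set.univ : Set (EuclideanSpace ℝ (Fin 0)))
              ≤ volume (closedBall (0 : EuclideanSpace ℝ (Fin 0)) 1) := by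
                apply measure_mono
                intro x _
                rw [Subsingleton.elim x 0]
                exact mem_closedBall_self zero_le_one
            _ < ⊤ := measure_closedBall_lt_top
  · haveI : Nontrivial (EuclideanSpace ℝ (Fin n)) :=
      Module.nontrivial_of_finrank_pos (R := ℝ) (by rw [finrank_euclideanSpace_fin]; exact hn)
    rw [lintegral_norm_polar volume g hgm]
    rw [show Module.finrank ℝ (EuclideanSpace ℝ (Fin n)) = n from finrank_euclideanSpace_fin]
    exact ENNReal.mul_lt_top (measure_lt_top _ _)
      (tail_lt_top n hn φ hpos hcomp hint)

end Aux

lemma jap_one_le {n : ℕ} (ξ : EuclideanSpace ℝ (Fin n)) : 1 ≤ jap ξ := by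
  rw [jap, Real.one_le_sqrt] <;> nlinarith [sq_nonneg ‖ξ‖]

lemma jap_pos {n : ℕ} (ξ : EuclideanSpace ℝ (Fin n)) : 0 < jap ξ :=
  zero_lt_one.trans_le (jap_one_le ξ)

lemma norm_le_jap {n : ℕ} (ξ : EuclideanSpace ℝ (Fin n)) : ‖ξ‖ ≤ jap ξ := by
  rw [jap]
  calc ‖ξ‖ = Real.sqrt (‖ξ‖ ^ 2) := (Real.sqrt_sq (norm_nonneg _)).symm
    _ ≤ _ := Real.sqrt_le_sqrt (by linarith)

lemma jap_measurable {n : ℕ} : Measurable fun ξ : EuclideanSpace ℝ (Fin n) => jap ξ := by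
  simp only [jap]; fun_prop

lemma cauchy_schwarz_key (n : ℕ) (l : ℕ) (φ : ℝ → ℝ)
    (hm : Measurable φ) (hpos : ∀ t, 1 ≤ t → 0 < φ t)
    (w : EuclideanSpace ℝ (Fin n) → ℂ) (hw : Measurable w) (i : ℕ) (hi : i ≤ l) :
    ∫⁻ ξ, ENNReal.ofReal (‖ξ‖ ^ i * ‖w ξ‖) ≤
      (hNormSq n ((l : ℝ) + n / 2) φ w) ^ (1/2:ℝ) *
        (∫⁻ ξ : EuclideanSpace ℝ (Fin n),
          ENNReal.ofReal ((jap ξ ^ n)⁻¹ / φ (jap ξ) ^ 2)) ^ (1/2:ℝ) := by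
  set s : ℝ := (l : ℝ) + (n : ℝ) / 2 with hs
  set D : EuclideanSpace ℝ (Fin n) → ℝ := fun ξ => jap ξ ^ ((i:ℝ) - s) / φ (jap ξ) with hD
  have hφ0 : ∀ ξ : EuclideanSpace ℝ (Fin n), φ (jap ξ) ≠ 0 :=
    fun ξ => (hpos _ (jap_one_le ξ)).ne'
  have hWnn : ∀ ξ : EuclideanSpace ℝ (Fin n), 0 ≤ hWeight s φ ξ := by
    intro ξ
    have := hpos _ (jap_one_le ξ)
    have := jap_pos ξ
    rw [hWeight]
    positivity
  have hDnn : ∀ ξ : EuclideanSpace ℝ (Fin n), 0 ≤ D ξ := by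
    intro ξ
    have := hpos _ (jap_one_le ξ)
    have := jap_pos ξ
    rw [hD]
    positivity
  have hWD : ∀ ξ : EuclideanSpace ℝ (Fin n), hWeight s φ ξ * D ξ = jap ξ ^ i := by
    intro ξ
    rw [hWeight, hD]
    have hj := jap_pos ξ
    calc jap ξ ^ s * φ (jap ξ) * (jap ξ ^ ((i:ℝ) - s) / φ (jap ξ))
        = jap ξ ^ s * jap ξ ^ ((i:ℝ) - s) * (φ (jap ξ) / φ (jap ξ)) := by ring
      _ = jap ξ ^ ((i:ℝ)) := by
          rw [← Real.rpow_add hj, div_self (hφ0 ξ), mul_one]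
          norm_num
      _ = jap ξ ^ i := Real.rpow_natCast _ i
  have hptwise : ∀ ξ, ENNReal.ofReal (‖ξ‖ ^ i * ‖w ξ‖) ≤
      (ENNReal.ofReal (hWeight s φ ξ * ‖w ξ‖)) * ENNReal.ofReal (D ξ) := by
    intro ξ
    rw [← ENNReal.ofReal_mul (by have := hWnn ξ; positivity)]
    apply ENNReal.ofReal_le_ofReal
    calc ‖ξ‖ ^ i * ‖w ξ‖ ≤ jap ξ ^ i * ‖w ξ‖ := by
          apply mul_le_mul_of_nonneg_right _ (norm_nonneg _)
          exact pow_le_pow_left₀ (norm_nonneg _) (norm_le_jap ξ) i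
      _ = hWeight s φ ξ * ‖w ξ‖ * D ξ := by rw [← hWD ξ]; ring
  have hWmeas : Measurable fun ξ : EuclideanSpace ℝ (Fin n) => hWeight s φ ξ := by
    unfold hWeight jap
    fun_prop
  have hDmeas : Measurable D := by
    have : D = fun ξ : EuclideanSpace ℝ (Fin n) =>
        Real.sqrt (1 + ‖ξ‖ ^ 2) ^ ((i:ℝ) - s) / φ (Real.sqrt (1 + ‖ξ‖ ^ 2)) := by
      rw [hD]; rfl
    rw [this]
    fun_prop
  have hmeas1 : Measurable fun ξ : EuclideanSpace ℝ (Fin n) =>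
      ENNReal.ofReal (hWeight s φ ξ * ‖w ξ‖) :=
    ENNReal.measurable_ofReal.comp (hWmeas.mul hw.norm)
  have hmeas2 : Measurable fun ξ : EuclideanSpace ℝ (Fin n) => ENNReal.ofReal (D ξ) :=
    ENNReal.measurable_ofReal.comp hDmeas
  calc ∫⁻ ξ, ENNReal.ofReal (‖ξ‖ ^ i * ‖w ξ‖)
      ≤ ∫⁻ ξ, (ENNReal.ofReal (hWeight s φ ξ * ‖w ξ‖)) * ENNReal.ofReal (D ξ) :=
        lintegral_mono hptwise
    _ ≤ (∫⁻ ξ, ENNReal.ofReal (hWeight s φ ξ * ‖w ξ‖) ^ (2:ℝ)) ^ (1/2:ℝ) *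
          (∫⁻ ξ, ENNReal.ofReal (D ξ) ^ (2:ℝ)) ^ (1/2:ℝ) :=
        ENNReal.lintegral_mul_le_Lp_mul_Lq volume Real.HolderConjugate.two_two
          hmeas1.aemeasurable hmeas2.aemeasurable
    _ ≤ _ := by
        have comp1 : (∫⁻ ξ, ENNReal.ofReal (hWeight s φ ξ * ‖w ξ‖) ^ (2:ℝ))
            = hNormSq n s φ w := by
          apply lintegral_congr
          intro ξ
          rw [ENNReal.ofReal_mul (hWnn ξ), ofReal_norm_eq_enorm, enorm_eq_nnnorm,
            show (2:ℝ) = ((2:ℕ):ℝ) by norm_num, ENNReal.rpow_natCast,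
            mul_pow, ← ENNReal.ofReal_pow (hWnn ξ)]
        have comp2 : (∫⁻ ξ, ENNReal.ofReal (D ξ) ^ (2:ℝ)) ≤
            ∫⁻ ξ : EuclideanSpace ℝ (Fin n),
              ENNReal.ofReal ((jap ξ ^ n)⁻¹ / φ (jap ξ) ^ 2) := by
          apply lintegral_mono
          intro ξ
          beta_reduce
          rw [show (2:ℝ) = ((2:ℕ):ℝ) by norm_num, ENNReal.rpow_natCast,
            ← ENNReal.ofReal_pow (hDnn ξ)]
          apply ENNReal.ofReal_le_ofReal
          rw [hD, div_pow]
          have hj := jap_pos ξ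
          have hφp := hpos _ (jap_one_le ξ)
          have he : (jap ξ ^ ((i:ℝ) - s)) ^ 2 = jap ξ ^ (2 * ((i:ℝ) - s)) := by
            rw [← Real.rpow_natCast (jap ξ ^ ((i:ℝ) - s)) 2, ← Real.rpow_mul hj.le]
            norm_num
            ring_nf
          rw [he]
          have hnum : jap ξ ^ (2 * ((i:ℝ) - s)) ≤ (jap ξ ^ n)⁻¹ := by
            rw [← Real.rpow_natCast (jap ξ) n, ← Real.rpow_neg hj.le]
            apply Real.rpow_le_rpow_of_exponent_le (jap_one_le ξ)
            have : (i:ℝ) ≤ (l:ℝ) := Nat.cast_le.2 hi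
            rw [hs]
            push_cast
            linarith
          gcongr
        rw [comp1]
        exact mul_le_mul_right (ENNReal.rpow_le_rpow comp2 (by norm_num)) _


/-- Hörmander's embedding theorem (sufficiency): if `∫₁^∞ dt/(t φ(t)²) < ∞`, then every
`w ∈ H^{l+n/2,φ}(ℝⁿ)` (represented by its Fourier transform `ŵ`, so that
`w = 𝓕⁻¹ ŵ`) is of class `C^l` with bounded derivatives up to order `l`, and
`sup_{|α| ≤ l} ‖∂^α w‖_∞ ≤ c ‖w‖_{l+n/2,φ}` with `c` independent of `w`. -/
theorem stmt5 (n : ℕ) (l : ℕ) (φ : ℝ → ℝ) (hφ : MemM φ)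
    (hint : ∫⁻ t in Set.Ici (1 : ℝ), ENNReal.ofReal (1 / (t * φ t ^ 2)) < ⊤) :
    ∃ c : ℝ, 0 < c ∧ ∀ what : EuclideanSpace ℝ (Fin n) → ℂ, Measurable what →
      hNormSq n ((l : ℝ) + n / 2) φ what < ⊤ →
      ContDiff ℝ l (FourierTransformInv.fourierInv what) ∧
      ∀ i : ℕ, i ≤ l → ∀ x : EuclideanSpace ℝ (Fin n),
        ‖iteratedFDeriv ℝ i (FourierTransformInv.fourierInv what) x‖ ≤
          c * (hNormSq n ((l : ℝ) + n / 2) φ what).toReal ^ (1 / 2 : ℝ) := by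
  obtain ⟨hm, hpos, hcomp, -⟩ := hφ
  set J : ℝ≥0∞ := ∫⁻ ξ : EuclideanSpace ℝ (Fin n),
    ENNReal.ofReal ((jap ξ ^ n)⁻¹ / φ (jap ξ) ^ 2) with hJ
  have hJlt : J < ⊤ := J_lt_top n φ hm hpos hcomp hint
  have hpi : (0:ℝ) < Real.pi := Real.pi_pos
  refine ⟨(2 * Real.pi) ^ l * (J.toReal ^ (1/2:ℝ) + 1), by positivity, ?_⟩
  intro w hw hfin
  have hkey : ∀ i : ℕ, i ≤ l → ∫⁻ ξ, ENNReal.ofReal (‖ξ‖ ^ i * ‖w ξ‖) ≤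
      (hNormSq n ((l:ℝ) + n/2) φ w) ^ (1/2:ℝ) * J ^ (1/2:ℝ) :=
    fun i hi => cauchy_schwarz_key n l φ hm hpos w hw i hi
  have hmeasi : ∀ i : ℕ, AEStronglyMeasurable
      (fun ξ : EuclideanSpace ℝ (Fin n) => ‖ξ‖ ^ i * ‖w ξ‖) volume :=
    fun i => ((measurable_norm.pow_const i).mul hw.norm).aestronglyMeasurable
  have hIntN : ∀ i : ℕ, i ≤ l →
      Integrable (fun ξ : EuclideanSpace ℝ (Fin n) => ‖ξ‖ ^ i * ‖w ξ‖) := by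
    intro i hi
    refine ⟨hmeasi i, ?_⟩
    rw [hasFiniteIntegral_iff_ofReal (Eventually.of_forall fun ξ => by positivity)]
    exact lt_of_le_of_lt (hkey i hi) (ENNReal.mul_lt_top
      (ENNReal.rpow_lt_top_of_nonneg (by norm_num) hfin.ne)
      (ENNReal.rpow_lt_top_of_nonneg (by norm_num) hJlt.ne))
  have hIntC : ∀ i : ℕ, (i:ℕ∞) ≤ (l:ℕ∞) →
      Integrable (fun v : EuclideanSpace ℝ (Fin n) => ‖v‖^i * ‖w v‖) :=
    fun i hi => hIntN i (by exact_mod_cast hi)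
  have hCDF : ContDiff ℝ (l:ℕ∞) (FourierTransform.fourier w) :=
    Real.contDiff_fourier hIntC
  have hIeq : FourierTransformInv.fourierInv w = (FourierTransform.fourier w) ∘ (fun x => -x) :=
    funext fun x => Real.fourierInv_eq_fourier_neg w x
  constructor
  · rw [hIeq]
    exact hCDF.comp contDiff_neg
  · intro i hi x
    have hBint : ∫ v : EuclideanSpace ℝ (Fin n), ‖v‖ ^ i * ‖w v‖ ≤
        (hNormSq n ((l:ℝ) + n/2) φ w).toReal ^ (1/2:ℝ) * J.toReal ^ (1/2:ℝ) := by
      rw [integral_eq_lintegral_of_nonneg_ae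
        (Eventually.of_forall fun v => by positivity) (hmeasi i)]
      have hne : (hNormSq n ((l:ℝ) + n/2) φ w) ^ (1/2:ℝ) * J ^ (1/2:ℝ) ≠ ⊤ :=
        (ENNReal.mul_lt_top (ENNReal.rpow_lt_top_of_nonneg (by norm_num) hfin.ne)
          (ENNReal.rpow_lt_top_of_nonneg (by norm_num) hJlt.ne)).ne
      calc (∫⁻ v, ENNReal.ofReal (‖v‖ ^ i * ‖w v‖)).toReal
          ≤ ((hNormSq n ((l:ℝ) + n/2) φ w) ^ (1/2:ℝ) * J ^ (1/2:ℝ)).toReal :=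
            ENNReal.toReal_mono hne (hkey i hi)
        _ = _ := by rw [ENNReal.toReal_mul, ← ENNReal.toReal_rpow, ← ENNReal.toReal_rpow]
    have hnormeq : ‖iteratedFDeriv ℝ i (FourierTransformInv.fourierInv w) x‖ =
        ‖iteratedFDeriv ℝ i (FourierTransform.fourier w) (-x)‖ := by
      rw [hIeq]
      simpa using LinearIsometryEquiv.norm_iteratedFDeriv_comp_right
        (LinearIsometryEquiv.neg ℝ (E := EuclideanSpace ℝ (Fin n)))
        (FourierTransform.fourier w) x i
    have hrepr := Real.iteratedFDeriv_fourier (f := w) hIntC hw.aestronglyMeasurable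
      (show (i:ℕ∞) ≤ (l:ℕ∞) by exact_mod_cast hi)
    have hintg : Integrable (fun v => VectorFourier.fourierPowSMulRight (innerSL ℝ) w v i) :=
      VectorFourier.integrable_fourierPowSMulRight _ (hIntN i hi) hw.aestronglyMeasurable
    have hb2 : ∫ v, ‖VectorFourier.fourierPowSMulRight (innerSL ℝ) w v i‖ ≤
        (2 * Real.pi) ^ i * ∫ v : EuclideanSpace ℝ (Fin n), ‖v‖ ^ i * ‖w v‖ := by
      rw [← integral_const_mul]
      apply integral_mono hintg.norm ((hIntN i hi).const_mul _)
      intro v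
      calc ‖VectorFourier.fourierPowSMulRight (innerSL ℝ) w v i‖
          ≤ (2 * Real.pi * ‖innerSL ℝ (E := EuclideanSpace ℝ (Fin n))‖) ^ i * ‖v‖ ^ i * ‖w v‖ :=
            VectorFourier.norm_fourierPowSMulRight_le _ _ _ _
        _ ≤ (2 * Real.pi) ^ i * (‖v‖ ^ i * ‖w v‖) := by
            rw [← mul_assoc]
            apply mul_le_mul_of_nonneg_right _ (norm_nonneg _)
            apply mul_le_mul_of_nonneg_right _ (by positivity)
            apply pow_le_pow_left₀ (by positivity)
            nlinarith [norm_innerSL_le ℝ (E := EuclideanSpace ℝ (Fin n))]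
    have hb1 : ‖iteratedFDeriv ℝ i (FourierTransform.fourier w) (-x)‖ ≤
        ∫ v, ‖VectorFourier.fourierPowSMulRight (innerSL ℝ) w v i‖ := by
      rw [hrepr]
      exact VectorFourier.norm_fourierIntegral_le_integral_norm _ _ _ _ _
    have hint_nonneg : 0 ≤ ∫ v : EuclideanSpace ℝ (Fin n), ‖v‖ ^ i * ‖w v‖ :=
      integral_nonneg fun v => by positivity
    have h2pi : (1:ℝ) ≤ 2 * Real.pi := by nlinarith [Real.pi_gt_three]
    have hNnn : (0:ℝ) ≤ (hNormSq n ((l:ℝ) + n/2) φ w).toReal ^ (1/2:ℝ) :=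
      Real.rpow_nonneg ENNReal.toReal_nonneg _
    have hJnn : (0:ℝ) ≤ J.toReal ^ (1/2:ℝ) := Real.rpow_nonneg ENNReal.toReal_nonneg _
    calc ‖iteratedFDeriv ℝ i (FourierTransformInv.fourierInv w) x‖
        = ‖iteratedFDeriv ℝ i (FourierTransform.fourier w) (-x)‖ := hnormeq
      _ ≤ (2 * Real.pi) ^ i * ∫ v : EuclideanSpace ℝ (Fin n), ‖v‖ ^ i * ‖w v‖ := hb1.trans hb2
      _ ≤ (2 * Real.pi) ^ l *
          ((hNormSq n ((l:ℝ) + n/2) φ w).toReal ^ (1/2:ℝ) * J.toReal ^ (1/2:ℝ)) :=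
          mul_le_mul (pow_le_pow_right₀ h2pi hi) hBint hint_nonneg (by positivity)
      _ ≤ (2 * Real.pi) ^ l * (J.toReal ^ (1/2:ℝ) + 1) *
          (hNormSq n ((l:ℝ) + n/2) φ w).toReal ^ (1/2:ℝ) := by
          rw [mul_assoc]
          apply mul_le_mul_of_nonneg_left _ (by positivity)
          nlinarith
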